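/- Let n ≥ 1 and let k₁, k₂ be positive integers with k₁, k₂ < √(n/2) + 1/2. Suppose there exist a positive integer d and integers r₁, r₂ with n = k₁·d + r₁ = k₂·d + r₂, |r₁| ≤ k₁ - 1, and |r₂| ≤ k₂ - 1. Then k₁ = k₂. -/
import Mathlib

/-- Distinct small quotients cannot arise from the same modulus. -/
theorem stmt_9 (n : ℤ) (hn : 1 ≤ n) (k₁ k₂ : ℤ) (hk₁ : 0 < k₁) (hk₂ : 0 < k₂)
    (hb₁ : (k₁ : ℝ) < Real.sqrt ((n : ℝ) / 2) + 1 / 2)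
    (hb₂ : (k₂ : ℝ) < Real.sqrt ((n : ℝ) / 2) + 1 / 2)
    (d : ℤ) (hd : 0 < d) (r₁ r₂ : ℤ)
    (h₁ : n = k₁ * d + r₁) (h₂ : n = k₂ * d + r₂)
    (hr₁ : |r₁| ≤ k₁ - 1) (hr₂ : |r₂| ≤ k₂ - 1) :
    k₁ = k₂ := by
  have hq : ∀ k : ℤ, 0 < k → (k : ℝ) < Real.sqrt ((n : ℝ) / 2) + 1 / 2 →
      (2 * k - 1) ^ 2 < 2 * n := by
    intro k hk hb
    have hx : (0 : ℝ) ≤ (k : ℝ) - 1 / 2 := by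
      have : (1 : ℝ) ≤ (k : ℝ) := by exact_mod_cast hk
      linarith
    have hlt : (k : ℝ) - 1 / 2 < Real.sqrt ((n : ℝ) / 2) := by linarith
    have h := (Real.lt_sqrt hx).mp hlt
    have : ((2 * k - 1 : ℤ) : ℝ) ^ 2 < 2 * (n : ℝ) := by push_cast; nlinarith
    exact_mod_cast this
  have q1 := hq k₁ hk₁ hb₁
  have q2 := hq k₂ hk₂ hb₂
  have habs₁ := abs_le.mp hr₁
  have habs₂ := abs_le.mp hr₂
  by_contra hne
  have key : (k₂ - k₁) * n = k₂ * r₁ - k₁ * r₂ := by nlinarith [h₁, h₂]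
  have h1 : 1 ≤ |k₂ - k₁| := Int.one_le_abs (sub_ne_zero_of_ne (Ne.symm hne))
  have : n ≤ |(k₂ - k₁) * n| := by
    rw [abs_mul, abs_of_pos (by linarith : (0:ℤ) < n)]
    nlinarith
  rw [key] at this
  have hbound : |k₂ * r₁ - k₁ * r₂| ≤ k₂ * (k₁ - 1) + k₁ * (k₂ - 1) := by
    calc |k₂ * r₁ - k₁ * r₂| ≤ |k₂ * r₁| + |k₁ * r₂| := abs_sub _ _
    _ = k₂ * |r₁| + k₁ * |r₂| := by
        rw [abs_mul, abs_mul, abs_of_pos hk₂, abs_of_pos hk₁]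
    _ ≤ k₂ * (k₁ - 1) + k₁ * (k₂ - 1) := by
        gcongr
  nlinarith
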